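/- Let g3(n)=α1 n+α0, g2(n)=β1 n+β0, g1(n)=γ1 n+γ0 be real polynomials of degree at most 1 with g3(n) > 0, g2(n) > 0 and g1(n) < 0 for all integers n ≥ 0, and with g2(n)² + 4 g3(n) g1(n) ≥ 0 for all n ≥ 1. For n ≥ 1 let λ_n = (g2(n) − √(g2(n)² + 4 g3(n) g1(n)))/(2 g3(n)) be the smaller root of the n-th characteristic polynomial χ_n(x) = g3(n)x² − g2(n)x − g1(n), and suppose the sequence (λ_n)_{n≥1} is decreasing (λ_{n+1} ≤ λ_n for all n ≥ 1). If (u_n)_{n≥-1} is a solution of g3(n)u_n = g2(n)u_{n-1} + g1(n)u_{n-2} (n ≥ 1) and there is k ≥ 1 with u_{-1} > 0, u_0 > 0, …, u_k > 0 and u_k/u_{k-1} ≥ λ_k, then u_n > 0 for every n ≥ −1. -/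

import Mathlib

/-- The smaller root `λ_n` of the `n`-th characteristic polynomial
`χ_n(x) = g3(n) x² − g2(n) x − g1(n)`, for `g3(n) = α1 n + α0`, `g2(n) = β1 n + β0`,
`g1(n) = γ1 n + γ0`. -/
noncomputable def charRootLo (α1 α0 β1 β0 γ1 γ0 : ℝ) (n : ℤ) : ℝ :=
  ((β1 * (n : ℝ) + β0) -
      Real.sqrt ((β1 * (n : ℝ) + β0) ^ 2 +
        4 * (α1 * (n : ℝ) + α0) * (γ1 * (n : ℝ) + γ0))) /
    (2 * (α1 * (n : ℝ) + α0))

/-- Signature `(+,−)`, nonnegative discriminants, `(λ_n)` decreasing: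
if a solution `u` satisfies `u (-1), …, u k > 0` and `u k / u (k-1) ≥ λ_k` for some `k ≥ 1`,
then `u n > 0` for every `n ≥ −1`. -/
theorem stmt_14 (α1 α0 β1 β0 γ1 γ0 : ℝ) (u : ℤ → ℝ) (k : ℤ)
    (hsig : ∀ n : ℤ, 0 ≤ n →
      0 < α1 * (n : ℝ) + α0 ∧ 0 < β1 * (n : ℝ) + β0 ∧ γ1 * (n : ℝ) + γ0 < 0)
    (hdisc : ∀ n : ℤ, 1 ≤ n →
      0 ≤ (β1 * (n : ℝ) + β0) ^ 2 + 4 * (α1 * (n : ℝ) + α0) * (γ1 * (n : ℝ) + γ0))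
    (hdec : ∀ n : ℤ, 1 ≤ n →
      charRootLo α1 α0 β1 β0 γ1 γ0 (n + 1) ≤ charRootLo α1 α0 β1 β0 γ1 γ0 n)
    (hu : ∀ n : ℤ, 1 ≤ n →
      (α1 * (n : ℝ) + α0) * u n =
        (β1 * (n : ℝ) + β0) * u (n - 1) + (γ1 * (n : ℝ) + γ0) * u (n - 2))
    (hk : 1 ≤ k)
    (hupos : ∀ n : ℤ, -1 ≤ n → n ≤ k → 0 < u n)
    (hratio : charRootLo α1 α0 β1 β0 γ1 γ0 k ≤ u k / u (k - 1)) :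
    ∀ n : ℤ, -1 ≤ n → 0 < u n := by
  set lam : ℤ → ℝ := charRootLo α1 α0 β1 β0 γ1 γ0 with hlamdef
  -- for every m ≥ 1, lam m is positive and is a root of the characteristic polynomial
  have hroot : ∀ m : ℤ, 1 ≤ m → 0 < lam m ∧
      (α1 * (m : ℝ) + α0) * (lam m) ^ 2 =
        (β1 * (m : ℝ) + β0) * lam m + (γ1 * (m : ℝ) + γ0) := by
    intro m hm
    obtain ⟨ha, hb, hc⟩ := hsig m (by linarith)
    have hd := hdisc m hm
    set s : ℝ := Real.sqrt ((β1 * (m : ℝ) + β0) ^ 2 +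
        4 * (α1 * (m : ℝ) + α0) * (γ1 * (m : ℝ) + γ0)) with hsdef
    have hs2 : s ^ 2 = (β1 * (m : ℝ) + β0) ^ 2 +
        4 * (α1 * (m : ℝ) + α0) * (γ1 * (m : ℝ) + γ0) := Real.sq_sqrt hd
    have hsnn : 0 ≤ s := Real.sqrt_nonneg _
    have hslt : s < β1 * (m : ℝ) + β0 := by nlinarith
    have hL : lam m = ((β1 * (m : ℝ) + β0) - s) / (2 * (α1 * (m : ℝ) + α0)) := rfl
    have h2a : (2 * (α1 * (m : ℝ) + α0)) ≠ 0 := by positivity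
    have hLmul : lam m * (2 * (α1 * (m : ℝ) + α0)) = (β1 * (m : ℝ) + β0) - s := by
      rw [hL, div_mul_cancel₀ _ h2a]
    constructor
    · rw [hL]; apply div_pos (by linarith) (by linarith)
    · have haux : 4 * (α1 * (m : ℝ) + α0) *
          ((α1 * (m : ℝ) + α0) * (lam m) ^ 2 -
            (β1 * (m : ℝ) + β0) * lam m - (γ1 * (m : ℝ) + γ0)) = 0 := by
        linear_combination (2 * (α1 * (m : ℝ) + α0) * lam m - (β1 * (m : ℝ) + β0) - s) *
          hLmul + hs2
      have h4 : (4 * (α1 * (m : ℝ) + α0)) ≠ 0 := by positivity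
      have := (mul_eq_zero.mp haux).resolve_left h4
      linarith
  -- invariant for n ≥ k
  have hinv : ∀ n : ℤ, k ≤ n → 0 < u (n - 1) ∧ 0 < u n ∧ lam n * u (n - 1) ≤ u n := by
    refine fun n => Int.le_induction (motive := fun n _ => 0 < u (n - 1) ∧ 0 < u n ∧ lam n * u (n - 1) ≤ u n) ?_ ?_ n
    · have h1 : 0 < u (k - 1) := hupos (k - 1) (by linarith) (by linarith)
      have h2 : 0 < u k := hupos k (by linarith) le_rfl
      exact ⟨h1, h2, by have := (le_div_iff₀ h1).mp hratio; linarith⟩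
    · intro m hm ih
      obtain ⟨h1, h2, h3⟩ := ih
      have hm1 : (1 : ℤ) ≤ m := le_trans hk hm
      have hm2 : (1 : ℤ) ≤ m + 1 := by linarith
      obtain ⟨hLpos, hLroot⟩ := hroot (m + 1) hm2
      obtain ⟨hLpos', _⟩ := hroot m hm1
      obtain ⟨ha, hb, hc⟩ := hsig (m + 1) (by linarith)
      have hrec := hu (m + 1) hm2
      have e1 : m + 1 - 1 = m := by ring
      have e2 : m + 1 - 2 = m - 1 := by ring
      rw [e1, e2] at hrec
      push_cast at hrec hLroot ha hb hc
      have hdecm := hdec m hm1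
      have hL2 : lam (m + 1) ≤ lam m := hdecm
      -- u m - lam (m+1) * u (m-1) ≥ 0
      have hstep : 0 ≤ u m - lam (m + 1) * u (m - 1) := by nlinarith
      -- key identity
      have hkey : (α1 * ((m : ℝ) + 1) + α0) * lam (m + 1) *
          (u (m + 1) - lam (m + 1) * u m) =
          -(γ1 * ((m : ℝ) + 1) + γ0) * (u m - lam (m + 1) * u (m - 1)) := by
        linear_combination lam (m + 1) * hrec - u m * hLroot
      have hpos1 : 0 < (α1 * ((m : ℝ) + 1) + α0) * lam (m + 1) := by positivity
      have hge : lam (m + 1) * u m ≤ u (m + 1) := by nlinarith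
      have e3 : m + 1 - 1 = m := by ring
      rw [e3]
      refine ⟨h2, ?_, hge⟩
      nlinarith
  intro n hn
  rcases le_or_gt n k with h | h
  · exact hupos n hn h
  · exact (hinv n h.le).2.1
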